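/- Let d be a positive integer and μ, σ, γ > 0, and let 0 < ε < μ. For a real number n > 0, consider the derivative of the map e ↦ r_rob(n, e) at e = ε. If 0 < n < (σ²/(2με))·log((μ+ε)/(μ−ε)), then this derivative is strictly negative, and if n > (σ²/(2με))·log((μ+ε)/(μ−ε)), then this derivative is strictly positive. -/

import Mathlib

/-- For `0 < ε < μ`, the derivative of `e ↦ r_rob(n, e)` at `e = ε` is negative when
`0 < n < (σ²/(2με))·log((μ+ε)/(μ−ε))` and positive when
`n > (σ²/(2με))·log((μ+ε)/(μ−ε))`. -/
theorem r_rob_deriv_sign_small_eps (d : ℕ) (hd : 0 < d) (μ σ γ ε : ℝ)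
    (hμ : 0 < μ) (hσ : 0 < σ) (hγ : 0 < γ) (hε0 : 0 < ε) (hεμ : ε < μ) (n : ℝ) :
    (0 < n → n < σ ^ 2 / (2 * μ * ε) * Real.log ((μ + ε) / (μ - ε)) →
      deriv (fun e : ℝ => d * γ * σ * Real.sqrt (2 / (n * Real.pi)) *
        (Real.exp (-(n * (e + μ) ^ 2) / (2 * σ ^ 2)) +
          Real.exp (-(n * (e - μ) ^ 2) / (2 * σ ^ 2)) -
          Real.exp (-(n * μ ^ 2) / (2 * σ ^ 2)))) ε < 0) ∧
    (n > σ ^ 2 / (2 * μ * ε) * Real.log ((μ + ε) / (μ - ε)) →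
      0 < deriv (fun e : ℝ => d * γ * σ * Real.sqrt (2 / (n * Real.pi)) *
        (Real.exp (-(n * (e + μ) ^ 2) / (2 * σ ^ 2)) +
          Real.exp (-(n * (e - μ) ^ 2) / (2 * σ ^ 2)) -
          Real.exp (-(n * μ ^ 2) / (2 * σ ^ 2)))) ε) := by
  have hμε : 0 < μ - ε := by linarith
  have hμε' : 0 < μ + ε := by linarith
  have hσ2 : (0:ℝ) < σ ^ 2 := by positivity
  have h2με : (0:ℝ) < 2 * μ * ε := by positivity
  set L := Real.log ((μ + ε) / (μ - ε)) with hLdef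
  have hlog : L = Real.log (μ + ε) - Real.log (μ - ε) :=
    Real.log_div (ne_of_gt hμε') (ne_of_gt hμε)
  have hLpos : 0 < L := by
    have := Real.log_lt_log hμε (by linarith : μ - ε < μ + ε)
    rw [hlog]; linarith
  have key : ∀ a : ℝ, HasDerivAt (fun e : ℝ => Real.exp (-(n * (e + a) ^ 2) / (2 * σ ^ 2)))
      (Real.exp (-(n * (ε + a) ^ 2) / (2 * σ ^ 2)) * (-(n * (2 * (ε + a))) / (2 * σ ^ 2))) ε := by
    intro a
    have h1 : HasDerivAt (fun e : ℝ => e + a) 1 ε := (hasDerivAt_id ε).add_const a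
    have h2 : HasDerivAt (fun e : ℝ => (e + a) ^ 2) (2 * (ε + a)) ε := by
      simpa using h1.fun_pow 2
    have h3 : HasDerivAt (fun e : ℝ => -(n * (e + a) ^ 2) / (2 * σ ^ 2))
        (-(n * (2 * (ε + a))) / (2 * σ ^ 2)) ε := ((h2.const_mul n).neg).div_const (2 * σ ^ 2)
    exact h3.exp
  have keyB : HasDerivAt (fun e : ℝ => Real.exp (-(n * (e - μ) ^ 2) / (2 * σ ^ 2)))
      (Real.exp (-(n * (ε - μ) ^ 2) / (2 * σ ^ 2)) * (-(n * (2 * (ε - μ))) / (2 * σ ^ 2))) ε := by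
    simpa [sub_eq_add_neg] using key (-μ)
  set C : ℝ := (d : ℝ) * γ * σ * Real.sqrt (2 / (n * Real.pi)) with hCdef
  set A : ℝ := -(n * (ε + μ) ^ 2) / (2 * σ ^ 2) with hAdef
  set B : ℝ := -(n * (ε - μ) ^ 2) / (2 * σ ^ 2) with hBdef
  have hder : HasDerivAt (fun e : ℝ => C *
      (Real.exp (-(n * (e + μ) ^ 2) / (2 * σ ^ 2)) +
        Real.exp (-(n * (e - μ) ^ 2) / (2 * σ ^ 2)) -
        Real.exp (-(n * μ ^ 2) / (2 * σ ^ 2))))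
      (C * (Real.exp A * (-(n * (2 * (ε + μ))) / (2 * σ ^ 2)) +
        Real.exp B * (-(n * (2 * (ε - μ))) / (2 * σ ^ 2)))) ε :=
    (((key μ).add keyB).sub_const _).const_mul C
  have hV : C * (Real.exp A * (-(n * (2 * (ε + μ))) / (2 * σ ^ 2)) +
      Real.exp B * (-(n * (2 * (ε - μ))) / (2 * σ ^ 2)))
      = (C * n / (2 * σ ^ 2)) * (2 * (μ - ε) * Real.exp B - 2 * (μ + ε) * Real.exp A) := by
    ring
  have hBA : B - A = n * (2 * μ * ε) / σ ^ 2 := by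
    rw [hAdef, hBdef]
    field_simp
    ring
  have hd' : (0:ℝ) < (d : ℝ) := by exact_mod_cast hd
  constructor
  · intro hn hn2
    have hs : 0 < Real.sqrt (2 / (n * Real.pi)) :=
      Real.sqrt_pos.mpr (by positivity)
    have hCpos : 0 < C := by
      rw [hCdef]; exact mul_pos (mul_pos (mul_pos hd' hγ) hσ) hs
    have hineq : n * (2 * μ * ε) < σ ^ 2 * L := by
      have h1 : σ ^ 2 / (2 * μ * ε) * L = σ ^ 2 * L / (2 * μ * ε) := by ring
      rw [h1] at hn2
      exact (lt_div_iff₀ h2με).mp hn2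
    have hBA' : B - A < L := by
      rw [hBA, div_lt_iff₀ hσ2]
      nlinarith [hineq]
    have hkey : (μ - ε) * Real.exp B < (μ + ε) * Real.exp A := by
      have e1 : (μ - ε) * Real.exp B = Real.exp (Real.log (μ - ε) + B) := by
        rw [Real.exp_add, Real.exp_log hμε]
      have e2 : (μ + ε) * Real.exp A = Real.exp (Real.log (μ + ε) + A) := by
        rw [Real.exp_add, Real.exp_log hμε']
      rw [e1, e2]
      exact Real.exp_lt_exp.mpr (by linarith)
    rw [hder.deriv, hV]
    exact mul_neg_of_pos_of_neg (by positivity) (by linarith)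
  · intro hn2
    have hn : 0 < n :=
      lt_trans (mul_pos (div_pos hσ2 h2με) hLpos) hn2
    have hs : 0 < Real.sqrt (2 / (n * Real.pi)) :=
      Real.sqrt_pos.mpr (by positivity)
    have hCpos : 0 < C := by
      rw [hCdef]; exact mul_pos (mul_pos (mul_pos hd' hγ) hσ) hs
    have hineq : σ ^ 2 * L < n * (2 * μ * ε) := by
      have h1 : σ ^ 2 / (2 * μ * ε) * L = σ ^ 2 * L / (2 * μ * ε) := by ring
      rw [h1] at hn2
      exact (div_lt_iff₀ h2με).mp hn2
    have hBA' : L < B - A := by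
      rw [hBA, lt_div_iff₀ hσ2]
      nlinarith [hineq]
    have hkey : (μ + ε) * Real.exp A < (μ - ε) * Real.exp B := by
      have e1 : (μ - ε) * Real.exp B = Real.exp (Real.log (μ - ε) + B) := by
        rw [Real.exp_add, Real.exp_log hμε]
      have e2 : (μ + ε) * Real.exp A = Real.exp (Real.log (μ + ε) + A) := by
        rw [Real.exp_add, Real.exp_log hμε']
      rw [e1, e2]
      exact Real.exp_lt_exp.mpr (by linarith)
    rw [hder.deriv, hV]
    exact mul_pos (by positivity) (by linarith)
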